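/- Let L > 0, ν ≥ 0, k > 0, and r ∈ ℝ³ with ‖r‖₂ = 1. Let m : [0,∞) × [0,L] → ℝ³ be twice continuously differentiable in (t,x), satisfy the controlled Landau–Lifshitz equation ∂m/∂t = m × m_xx − ν m × (m × m_xx) + k(r − m) on [0,∞) × [0,L], and satisfy the Neumann boundary conditions m_x(t,0) = m_x(t,L) = 0 for all t ≥ 0. Then the Lyapunov function V(t) = (1/2)∫₀ᴸ ‖m(t,x) − r‖₂² dx + (1/2)∫₀ᴸ ‖m_x(t,x)‖₂² dx satisfies, for all t ≥ 0, dV/dt ≤ −(k − 2νL²) ∫₀ᴸ ‖m_x‖₂² dx − (ν/2) ∫₀ᴸ ‖m × m_xx‖₂² dx − k ∫₀ᴸ ‖m − r‖₂² dx. (The central Lyapunov estimate in the proofs of the paper's Theorems 3.7 and 3.8; the paper records the constant 8νL⁴ in place of 2νL².) -/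

import Mathlib

/-- Cross product on `ℝ³ = EuclideanSpace ℝ (Fin 3)`. -/
noncomputable def cross3 (u v : EuclideanSpace ℝ (Fin 3)) : EuclideanSpace ℝ (Fin 3) :=
  (WithLp.equiv 2 (Fin 3 → ℝ)).symm
    ![u 1 * v 2 - u 2 * v 1, u 2 * v 0 - u 0 * v 2, u 0 * v 1 - u 1 * v 0]

/-- Second spatial derivative `m_xx` of `m(t, x)`. -/
noncomputable def mxx (m : ℝ → ℝ → EuclideanSpace ℝ (Fin 3)) (t x : ℝ) :
    EuclideanSpace ℝ (Fin 3) :=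
  deriv (deriv (m t)) x

local notation "E3" => EuclideanSpace ℝ (Fin 3)

open scoped RealInnerProductSpace
open MeasureTheory intervalIntegral Set Metric

namespace LLHelper

lemma cross3_apply (u v : E3) (i : Fin 3) :
    cross3 u v i = ![u 1 * v 2 - u 2 * v 1, u 2 * v 0 - u 0 * v 2, u 0 * v 1 - u 1 * v 0] i := rfl

lemma inner3 (x y : E3) : ⟪x, y⟫ = x 0 * y 0 + x 1 * y 1 + x 2 * y 2 := by
  simp [PiLp.inner_apply, Fin.sum_univ_three]
  ring

lemma normsq3 (x : E3) : ‖x‖ ^ 2 = x 0 * x 0 + x 1 * x 1 + x 2 * x 2 := by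
  rw [← real_inner_self_eq_norm_sq, inner3]

lemma cross3_self (a : E3) : cross3 a a = 0 := by
  ext i; fin_cases i <;> simp [cross3_apply] <;> ring

lemma cross3_zero_left (b : E3) : cross3 0 b = 0 := by
  ext i; fin_cases i <;> simp [cross3_apply]

lemma cross3_zero_right (a : E3) : cross3 a 0 = 0 := by
  ext i; fin_cases i <;> simp [cross3_apply]

lemma norm_cross3_le (a b : E3) : ‖cross3 a b‖ ≤ ‖a‖ * ‖b‖ := by
  have h1 : ‖cross3 a b‖ ^ 2 ≤ (‖a‖ * ‖b‖) ^ 2 := by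
    have h2 := normsq3 (cross3 a b)
    have h3 := normsq3 a
    have h4 := normsq3 b
    simp only [cross3_apply] at h2
    rw [mul_pow, h2]
    simp only [Matrix.cons_val_zero, Matrix.cons_val_one, Matrix.head_cons,
      Matrix.cons_val_two, Matrix.tail_cons]
    nlinarith [sq_nonneg (a 0 * b 0 + a 1 * b 1 + a 2 * b 2), sq_nonneg (‖a‖*‖b‖), h3, h4]
  exact le_of_pow_le_pow_left₀ two_ne_zero (by positivity) h1

noncomputable def crossLin : E3 →ₗ[ℝ] E3 →ₗ[ℝ] E3 :=
  LinearMap.mk₂ ℝ (fun u v => cross3 u v)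
    (fun a a' b => by ext i; fin_cases i <;>
      simp [cross3_apply, PiLp.add_apply] <;> ring)
    (fun c a b => by ext i; fin_cases i <;>
      simp [cross3_apply, PiLp.smul_apply, smul_eq_mul] <;> ring)
    (fun a b b' => by ext i; fin_cases i <;>
      simp [cross3_apply, PiLp.add_apply] <;> ring)
    (fun c a b => by ext i; fin_cases i <;>
      simp [cross3_apply, PiLp.smul_apply, smul_eq_mul] <;> ring)

noncomputable def crossCLM : E3 →L[ℝ] E3 →L[ℝ] E3 :=
  LinearMap.toContinuousLinearMap
    { toFun := fun u => LinearMap.toContinuousLinearMap (crossLin u)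
      map_add' := fun u v => by ext w; simp [crossLin]
      map_smul' := fun c u => by ext w; simp [crossLin] }

lemma crossCLM_apply (u v : E3) : crossCLM u v = cross3 u v := rfl

lemma _root_.HasDerivAt.cross {f g : ℝ → E3} {f' g' : E3} {x : ℝ}
    (hf : HasDerivAt f f' x) (hg : HasDerivAt g g' x) :
    HasDerivAt (fun y => cross3 (f y) (g y)) (cross3 f' (g x) + cross3 (f x) g') x := by
  have h1 : HasDerivAt (fun y => crossCLM (f y)) (crossCLM f') x :=
    crossCLM.hasFDerivAt.comp_hasDerivAt x hf
  simpa [crossCLM_apply] using h1.clm_apply hg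

lemma _root_.Continuous.cross {α : Type*} [TopologicalSpace α] {f g : α → E3}
    (hf : Continuous f) (hg : Continuous g) :
    Continuous (fun y => cross3 (f y) (g y)) := by
  have : Continuous fun p : E3 × E3 => crossCLM p.1 p.2 := crossCLM.continuous₂
  exact this.comp (hf.prodMk hg)

lemma pointwise_inner (ν k : ℝ) (a c rr : E3) :
    ⟪a - rr - c, cross3 a c - ν • cross3 a (cross3 a c) + k • (rr - a)⟫
      = ((((ν * ⟪cross3 a c, cross3 rr a⟫ - ν * ‖cross3 a c‖ ^ 2)
        - k * ‖a - rr‖ ^ 2) + k * ⟪a - rr, c⟫) - ⟪rr, cross3 a c⟫) := by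
  simp only [inner3, normsq3, cross3_apply, PiLp.sub_apply, PiLp.add_apply, PiLp.smul_apply,
    smul_eq_mul, Matrix.cons_val_zero, Matrix.cons_val_one, Matrix.head_cons,
    Matrix.cons_val_two, Matrix.tail_cons]
  ring

/-- partial derivative in the first (time) variable -/
noncomputable def pd1 (M : ℝ × ℝ → E3) (p : ℝ × ℝ) : E3 := fderiv ℝ M p ((1 : ℝ), (0 : ℝ))

/-- partial derivative in the second (space) variable -/
noncomputable def pd2 (M : ℝ × ℝ → E3) (p : ℝ × ℝ) : E3 := fderiv ℝ M p ((0 : ℝ), (1 : ℝ))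

lemma hasDerivAt_pd1 {M : ℝ × ℝ → E3} (hM : Differentiable ℝ M) (t x : ℝ) :
    HasDerivAt (fun s => M (s, x)) (pd1 M (t, x)) t := by
  have hline : HasDerivAt (fun s : ℝ => (s, x)) ((1 : ℝ), (0 : ℝ)) t := by
    simpa using (hasDerivAt_id t).prodMk (hasDerivAt_const t x)
  exact ((hM (t, x)).hasFDerivAt.comp_hasDerivAt t hline)

lemma hasDerivAt_pd2 {M : ℝ × ℝ → E3} (hM : Differentiable ℝ M) (t x : ℝ) :
    HasDerivAt (fun y => M (t, y)) (pd2 M (t, x)) x := by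
  have hline : HasDerivAt (fun y : ℝ => (t, y)) ((0 : ℝ), (1 : ℝ)) x := by
    simpa using (hasDerivAt_const x t).prodMk (hasDerivAt_id x)
  exact ((hM (t, x)).hasFDerivAt.comp_hasDerivAt x hline)

lemma contDiff_pd1 {M : ℝ × ℝ → E3} (hM : ContDiff ℝ 2 M) : ContDiff ℝ 1 (pd1 M) := by
  have h : ContDiff ℝ 1 (fderiv ℝ M) := hM.fderiv_right (by norm_num)
  exact (ContinuousLinearMap.apply ℝ E3 ((1 : ℝ), (0 : ℝ))).contDiff.comp h

lemma contDiff_pd2 {M : ℝ × ℝ → E3} (hM : ContDiff ℝ 2 M) : ContDiff ℝ 1 (pd2 M) := by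
  have h : ContDiff ℝ 1 (fderiv ℝ M) := hM.fderiv_right (by norm_num)
  exact (ContinuousLinearMap.apply ℝ E3 ((0 : ℝ), (1 : ℝ))).contDiff.comp h

lemma continuous_pd1 {N : ℝ × ℝ → E3} (hN : ContDiff ℝ 1 N) : Continuous (pd1 N) := by
  have h : ContDiff ℝ 0 (fderiv ℝ N) := hN.fderiv_right (by norm_num)
  exact (ContinuousLinearMap.apply ℝ E3 ((1 : ℝ), (0 : ℝ))).continuous.comp h.continuous

lemma continuous_pd2 {N : ℝ × ℝ → E3} (hN : ContDiff ℝ 1 N) : Continuous (pd2 N) := by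
  have h : ContDiff ℝ 0 (fderiv ℝ N) := hN.fderiv_right (by norm_num)
  exact (ContinuousLinearMap.apply ℝ E3 ((0 : ℝ), (1 : ℝ))).continuous.comp h.continuous

/-- Clairaut / symmetry: the time derivative of `pd2 M` equals `pd2 (pd1 M)`. -/
lemma hasDerivAt_pd2_time {M : ℝ × ℝ → E3} (hM : ContDiff ℝ 2 M) (t x : ℝ) :
    HasDerivAt (fun s => pd2 M (s, x)) (pd2 (pd1 M) (t, x)) t := by
  have hdiff : Differentiable ℝ M := hM.differentiable (by norm_num)
  have hfd : Differentiable ℝ (fderiv ℝ M) :=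
    (hM.fderiv_right (m := 1) (by norm_num)).differentiable (by norm_num)
  set f'' := fderiv ℝ (fderiv ℝ M) (t, x) with hf''
  have hline : HasDerivAt (fun s : ℝ => (s, x)) ((1 : ℝ), (0 : ℝ)) t := by
    simpa using (hasDerivAt_id t).prodMk (hasDerivAt_const t x)
  have h1 : HasDerivAt (fun s => fderiv ℝ M (s, x)) (f'' ((1 : ℝ), (0 : ℝ))) t :=
    (hfd (t, x)).hasFDerivAt.comp_hasDerivAt t hline
  have h2 : HasDerivAt (fun s => pd2 M (s, x)) (f'' ((1 : ℝ), (0 : ℝ)) ((0 : ℝ), (1 : ℝ))) t := by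
    simpa [pd2] using h1.clm_apply (hasDerivAt_const t ((0 : ℝ), (1 : ℝ)))
  have hsymm : f'' ((1 : ℝ), (0 : ℝ)) ((0 : ℝ), (1 : ℝ))
      = f'' ((0 : ℝ), (1 : ℝ)) ((1 : ℝ), (0 : ℝ)) :=
    second_derivative_symmetric (fun y => (hdiff y).hasFDerivAt)
      ((hfd (t, x)).hasFDerivAt) _ _
  have h3 : pd2 (pd1 M) (t, x) = f'' ((0 : ℝ), (1 : ℝ)) ((1 : ℝ), (0 : ℝ)) := by
    have happ : HasFDerivAt (pd1 M)
        ((ContinuousLinearMap.apply ℝ E3 ((1 : ℝ), (0 : ℝ))).comp f'') (t, x) :=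
      (ContinuousLinearMap.apply ℝ E3 ((1 : ℝ), (0 : ℝ))).hasFDerivAt.comp (t, x)
        ((hfd (t, x)).hasFDerivAt)
    rw [pd2, happ.fderiv]; rfl
  rw [h3, ← hsymm]
  exact h2

lemma integral_cs {L : ℝ} (hL : 0 ≤ L) {f : ℝ → ℝ} (hf : Continuous f) :
    (∫ x in (0:ℝ)..L, f x) ^ 2 ≤ L * ∫ x in (0:ℝ)..L, (f x) ^ 2 := by
  set S := ∫ x in (0:ℝ)..L, f x with hS
  set T := ∫ x in (0:ℝ)..L, (f x) ^ 2 with hT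
  have hfi : IntervalIntegrable f MeasureTheory.volume 0 L := hf.intervalIntegrable _ _
  have hf2i : IntervalIntegrable (fun x => (f x) ^ 2) MeasureTheory.volume 0 L :=
    (hf.pow 2).intervalIntegrable _ _
  have key : ∀ c : ℝ, (∫ y in (0:ℝ)..L, (c - f y) ^ 2) = L * c ^ 2 + T - 2 * c * S := by
    intro c
    have e : (fun y => (c - f y) ^ 2)
        = fun y => (c ^ 2 + (f y) ^ 2) - (2 * c) * f y := by funext y; ring
    rw [e, intervalIntegral.integral_sub (intervalIntegrable_const.add hf2i)
        (hfi.const_mul _),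
      intervalIntegral.integral_add intervalIntegrable_const hf2i,
      intervalIntegral.integral_const_mul, intervalIntegral.integral_const]
    simp only [smul_eq_mul, sub_zero, ← hS, ← hT]
    try ring
  have hpoint : ∀ x : ℝ, 0 ≤ L * (f x) ^ 2 + T - 2 * f x * S := by
    intro x
    rw [← key (f x)]
    exact intervalIntegral.integral_nonneg hL (fun y _ => sq_nonneg _)
  have hnn : (0:ℝ) ≤ ∫ x in (0:ℝ)..L, (L * (f x) ^ 2 + T - 2 * f x * S) :=
    intervalIntegral.integral_nonneg hL (fun x _ => hpoint x)
  have hval : (∫ x in (0:ℝ)..L, (L * (f x) ^ 2 + T - 2 * f x * S))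
      = L * T + L * T - 2 * S * S := by
    have e : (fun x => L * (f x) ^ 2 + T - 2 * f x * S)
        = fun x => (L * (f x) ^ 2 + T) - (2 * S) * f x := by funext x; ring
    rw [e, intervalIntegral.integral_sub ((hf2i.const_mul L).add intervalIntegrable_const)
        (hfi.const_mul _),
      intervalIntegral.integral_add (hf2i.const_mul L) intervalIntegrable_const,
      intervalIntegral.integral_const_mul, intervalIntegral.integral_const_mul,
      intervalIntegral.integral_const]
    simp only [smul_eq_mul, sub_zero, ← hS, ← hT]
    try ring
  nlinarith [hnn, hval]

/-- Integration by parts with equal boundary inner products. -/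
lemma ibp {L : ℝ} {f g f' g' : ℝ → E3}
    (hf : ∀ x, HasDerivAt f (f' x) x) (hg : ∀ x, HasDerivAt g (g' x) x)
    (hf'c : Continuous f') (hg'c : Continuous g')
    (hb : ⟪f L, g L⟫ = ⟪f 0, g 0⟫) :
    (∫ x in (0:ℝ)..L, ⟪f x, g' x⟫) = - ∫ x in (0:ℝ)..L, ⟪f' x, g x⟫ := by
  have hfc : Continuous f := by
    rw [continuous_iff_continuousAt]; exact fun x => (hf x).continuousAt
  have hgc : Continuous g := by
    rw [continuous_iff_continuousAt]; exact fun x => (hg x).continuousAt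
  have i1 : IntervalIntegrable (fun x => ⟪f x, g' x⟫) MeasureTheory.volume 0 L :=
    (hfc.inner hg'c).intervalIntegrable _ _
  have i2 : IntervalIntegrable (fun x => ⟪f' x, g x⟫) MeasureTheory.volume 0 L :=
    (hf'c.inner hgc).intervalIntegrable _ _
  have hsum : (∫ x in (0:ℝ)..L, (⟪f x, g' x⟫ + ⟪f' x, g x⟫)) = 0 := by
    rw [intervalIntegral.integral_eq_sub_of_hasDerivAt
      (fun x _ => HasDerivAt.inner (𝕜 := ℝ) (hf x) (hg x)) (i1.add i2), hb, sub_self]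
  rw [intervalIntegral.integral_add i1 i2] at hsum
  linarith

lemma hasDerivAt_norm_sq {f : ℝ → E3} {f' : E3} {x : ℝ} (hf : HasDerivAt f f' x) :
    HasDerivAt (fun y => ‖f y‖ ^ 2) (2 * ⟪f x, f'⟫) x := by
  have h := HasDerivAt.inner (𝕜 := ℝ) hf hf
  have e : (fun y => ⟪f y, f y⟫) = fun y => ‖f y‖ ^ 2 :=
    funext fun y => real_inner_self_eq_norm_sq _
  rw [e] at h
  rw [real_inner_comm (f x) f', ← two_mul] at h; exact h

/-- Differentiation under the interval integral for `s ↦ ∫₀ᴸ ‖G (s,x) − r'‖²`. -/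
lemma hasDerivAt_param_integral {L : ℝ} (hL : 0 < L) {G G' : ℝ × ℝ → E3}
    (hGc : Continuous G) (hG'c : Continuous G')
    (hder : ∀ s x : ℝ, HasDerivAt (fun τ => G (τ, x)) (G' (s, x)) s) (r' : E3) (t : ℝ) :
    HasDerivAt (fun s => ∫ x in (0:ℝ)..L, ‖G (s, x) - r'‖ ^ 2)
      (∫ x in (0:ℝ)..L, 2 * ⟪G (t, x) - r', G' (t, x)⟫) t := by
  have hF'c : Continuous fun p : ℝ × ℝ => 2 * ⟪G p - r', G' p⟫ :=
    continuous_const.mul ((hGc.sub continuous_const).inner hG'c)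
  obtain ⟨C, hC⟩ := (IsCompact.exists_bound_of_continuousOn
    ((isCompact_Icc (a := t - 1) (b := t + 1)).prod (isCompact_Icc (a := (0:ℝ)) (b := L)))
    hF'c.continuousOn)
  have huIoc : Set.uIoc (0:ℝ) L = Ioc (0:ℝ) L := Set.uIoc_of_le hL.le
  refine (intervalIntegral.hasDerivAt_integral_of_dominated_loc_of_deriv_le
    (F := fun s x => ‖G (s, x) - r'‖ ^ 2)
    (F' := fun s x => 2 * ⟪G (s, x) - r', G' (s, x)⟫)
    (bound := fun _ => C) (Metric.ball_mem_nhds t one_pos) ?_ ?_ ?_ ?_ ?_ ?_).2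
  · exact Filter.Eventually.of_forall fun s =>
      (((hGc.comp (Continuous.prodMk_right s)).sub continuous_const).norm.pow 2).aestronglyMeasurable
  · exact (((hGc.comp (Continuous.prodMk_right t)).sub continuous_const).norm.pow 2).intervalIntegrable _ _
  · exact (hF'c.comp (Continuous.prodMk_right t)).aestronglyMeasurable
  · refine Filter.Eventually.of_forall fun x hx s hs => ?_
    have hx' : x ∈ Icc (0:ℝ) L := Ioc_subset_Icc_self (huIoc ▸ hx)
    have hs' : s ∈ Icc (t - 1) (t + 1) := by
      rw [Real.ball_eq_Ioo] at hs; exact Ioo_subset_Icc_self hs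
    exact hC (s, x) (Set.mk_mem_prod hs' hx')
  · exact intervalIntegrable_const
  · refine Filter.Eventually.of_forall fun x hx s hs => ?_
    exact hasDerivAt_norm_sq (((hder s x).sub_const r'))
end LLHelper

lemma LLHelper.final_arith (L ν k a b Q P Fq Iq Cg T : ℝ) (hL : 0 < L) (hν : 0 ≤ ν)
    (hCg2 : Cg ^ 2 ≤ L * Fq) (hT2 : T ^ 2 ≤ L * Q)
    (hCgnn : 0 ≤ Cg) (hTnn : 0 ≤ T) (hQnn : 0 ≤ Q) (hFnn : 0 ≤ Fq)
    (hIqle1 : Iq ≤ Cg * T)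
    (hVval : a + b = ν * Iq - ν * Fq - k * P - k * Q) :
    a + b ≤ -(k - 2 * ν * L ^ 2) * Q - ν / 2 * Fq - k * P := by
  have h1 : (Cg * T) ^ 2 ≤ (L * Fq) * (L * Q) := by
    calc (Cg * T) ^ 2 = Cg ^ 2 * T ^ 2 := by ring
      _ ≤ (L * Fq) * (L * Q) := mul_le_mul hCg2 hT2 (sq_nonneg _) (by positivity)
  have hprod : Cg * T ≤ Fq / 2 + L ^ 2 * Q / 2 := by
    have hs : 0 ≤ Fq / 2 + L ^ 2 * Q / 2 := by positivity
    have h2 : (Cg * T) ^ 2 ≤ (Fq / 2 + L ^ 2 * Q / 2) ^ 2 := by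
      nlinarith [h1, sq_nonneg (Fq - L ^ 2 * Q)]
    exact le_of_pow_le_pow_left₀ two_ne_zero hs h2
  have hIqle : Iq ≤ Fq / 2 + L ^ 2 * Q / 2 := le_trans hIqle1 hprod
  have hmul : ν * Iq ≤ ν * (Fq / 2 + L ^ 2 * Q / 2) := mul_le_mul_of_nonneg_left hIqle hν
  have h3 : 0 ≤ ν * (L ^ 2 * Q) := mul_nonneg hν (mul_nonneg (sq_nonneg L) hQnn)
  nlinarith [hVval, hmul, h3]

open LLHelper

theorem controlled_landau_lifshitz_lyapunov_estimate
    (L ν k : ℝ) (hL : 0 < L) (hν : 0 ≤ ν) (hk : 0 < k)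
    (r : EuclideanSpace ℝ (Fin 3)) (hr : ‖r‖ = 1)
    (m : ℝ → ℝ → EuclideanSpace ℝ (Fin 3))
    (hsmooth : ContDiff ℝ 2 (fun p : ℝ × ℝ => m p.1 p.2))
    (hpde : ∀ t x : ℝ, 0 ≤ t → x ∈ Set.Icc (0 : ℝ) L →
      deriv (fun s => m s x) t
        = cross3 (m t x) (mxx m t x)
          - ν • cross3 (m t x) (cross3 (m t x) (mxx m t x))
          + k • (r - m t x))
    (hbc : ∀ t : ℝ, 0 ≤ t → deriv (m t) 0 = 0 ∧ deriv (m t) L = 0) :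
    ∀ t : ℝ, 0 ≤ t →
      ∃ V' : ℝ,
        HasDerivWithinAt
          (fun s => (1 / 2) * (∫ x in (0 : ℝ)..L, ‖m s x - r‖ ^ 2)
            + (1 / 2) * ∫ x in (0 : ℝ)..L, ‖deriv (m s) x‖ ^ 2)
          V' (Set.Ici (0 : ℝ)) t ∧
        V' ≤ -(k - 2 * ν * L ^ 2) * (∫ x in (0 : ℝ)..L, ‖deriv (m t) x‖ ^ 2)
          - (ν / 2) * (∫ x in (0 : ℝ)..L, ‖cross3 (m t x) (mxx m t x)‖ ^ 2)
          - k * ∫ x in (0 : ℝ)..L, ‖m t x - r‖ ^ 2 := by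
  intro t ht
  set M : ℝ × ℝ → E3 := fun p => m p.1 p.2 with hM
  have hMdiff : Differentiable ℝ M := hsmooth.differentiable (by norm_num)
  have hpd1c1 : ContDiff ℝ 1 (pd1 M) := contDiff_pd1 hsmooth
  have hpd2c1 : ContDiff ℝ 1 (pd2 M) := contDiff_pd2 hsmooth
  -- identifications of derivatives
  have hderiv_m : ∀ s x : ℝ, deriv (m s) x = pd2 M (s, x) := fun s x =>
    (hasDerivAt_pd2 hMdiff s x).deriv
  have hu''d : ∀ x : ℝ, HasDerivAt (fun y => pd2 M (t, y)) (pd2 (pd2 M) (t, x)) x :=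
    fun x => hasDerivAt_pd2 (hpd2c1.differentiable one_ne_zero) t x
  have hw_d : ∀ x : ℝ, HasDerivAt (fun y => pd1 M (t, y)) (pd2 (pd1 M) (t, x)) x :=
    fun x => hasDerivAt_pd2 (hpd1c1.differentiable one_ne_zero) t x
  have hmxx_eq : ∀ x : ℝ, mxx m t x = pd2 (pd2 M) (t, x) := by
    intro x
    have h1 : deriv (m t) = fun y => pd2 M (t, y) := funext fun y => hderiv_m t y
    rw [mxx, h1]
    exact (hu''d x).deriv
  have hderiv_t : ∀ s x : ℝ, deriv (fun τ => m τ x) s = pd1 M (s, x) := fun s x =>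
    (hasDerivAt_pd1 hMdiff s x).deriv
  -- continuity
  have hcM : Continuous M := hsmooth.continuous
  have hc1 : Continuous (pd1 M) := hpd1c1.continuous
  have hc2 : Continuous (pd2 M) := hpd2c1.continuous
  have hc22 : Continuous (pd2 (pd2 M)) := continuous_pd2 hpd2c1
  have hc21 : Continuous (pd2 (pd1 M)) := continuous_pd2 hpd1c1
  have hcu : Continuous (fun x : ℝ => M (t, x)) := hcM.comp (Continuous.prodMk_right t)
  have hcw : Continuous (fun x : ℝ => pd1 M (t, x)) := hc1.comp (Continuous.prodMk_right t)
  have hcu' : Continuous (fun x : ℝ => pd2 M (t, x)) := hc2.comp (Continuous.prodMk_right t)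
  have hcu'' : Continuous (fun x : ℝ => pd2 (pd2 M) (t, x)) := hc22.comp (Continuous.prodMk_right t)
  have hcw' : Continuous (fun x : ℝ => pd2 (pd1 M) (t, x)) := hc21.comp (Continuous.prodMk_right t)
  have hcg : Continuous (fun x : ℝ => cross3 (M (t, x)) (pd2 M (t, x))) := hcu.cross hcu'
  have hcg' : Continuous (fun x : ℝ => cross3 (M (t, x)) (pd2 (pd2 M) (t, x))) :=
    hcu.cross hcu''
  -- boundary conditions
  have hub0 : pd2 M (t, 0) = 0 := by rw [← hderiv_m t 0]; exact (hbc t ht).1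
  have hubL : pd2 M (t, L) = 0 := by rw [← hderiv_m t L]; exact (hbc t ht).2
  -- derivative of g = m × m_x
  have hgd : ∀ x : ℝ, HasDerivAt (fun y => cross3 (M (t, y)) (pd2 M (t, y)))
      (cross3 (M (t, x)) (pd2 (pd2 M) (t, x))) x := fun x => by
    simpa [cross3_self] using (hasDerivAt_pd2 hMdiff t x).cross (hu''d x)
  -- differentiation under the integral sign
  have hA : HasDerivAt (fun s => ∫ x in (0:ℝ)..L, ‖M (s, x) - r‖ ^ 2)
      (∫ x in (0:ℝ)..L, 2 * ⟪M (t, x) - r, pd1 M (t, x)⟫) t :=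
    hasDerivAt_param_integral hL hcM hc1 (fun s x => hasDerivAt_pd1 hMdiff s x) r t
  have hB : HasDerivAt (fun s => ∫ x in (0:ℝ)..L, ‖pd2 M (s, x) - 0‖ ^ 2)
      (∫ x in (0:ℝ)..L, 2 * ⟪pd2 M (t, x) - 0, pd2 (pd1 M) (t, x)⟫) t :=
    hasDerivAt_param_integral hL hc2 hc21 (fun s x => hasDerivAt_pd2_time hsmooth s x) 0 t
  -- the candidate derivative
  set a := ∫ x in (0:ℝ)..L, ⟪M (t, x) - r, pd1 M (t, x)⟫ with ha
  set b := ∫ x in (0:ℝ)..L, ⟪pd2 M (t, x), pd2 (pd1 M) (t, x)⟫ with hb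
  have e1 : (∫ x in (0:ℝ)..L, 2 * ⟪M (t, x) - r, pd1 M (t, x)⟫) = 2 * a := by
    rw [ha]; exact intervalIntegral.integral_const_mul 2 _
  have e2 : (∫ x in (0:ℝ)..L, 2 * ⟪pd2 M (t, x) - 0, pd2 (pd1 M) (t, x)⟫) = 2 * b := by
    rw [hb]; simp only [sub_zero]; exact intervalIntegral.integral_const_mul 2 _
  have hV : HasDerivAt
      (fun s => (1 / 2) * (∫ x in (0 : ℝ)..L, ‖m s x - r‖ ^ 2)
        + (1 / 2) * ∫ x in (0 : ℝ)..L, ‖deriv (m s) x‖ ^ 2) (a + b) t := by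
    have h := (hA.const_mul (1/2 : ℝ)).add (hB.const_mul (1/2 : ℝ))
    have hfn : (fun s => (1 / 2) * (∫ x in (0 : ℝ)..L, ‖m s x - r‖ ^ 2)
          + (1 / 2) * ∫ x in (0 : ℝ)..L, ‖deriv (m s) x‖ ^ 2)
        = (fun s => (1 / 2) * (∫ x in (0 : ℝ)..L, ‖M (s, x) - r‖ ^ 2)
          + (1 / 2) * ∫ x in (0 : ℝ)..L, ‖pd2 M (s, x) - 0‖ ^ 2) := by
      funext s
      simp only [hderiv_m, sub_zero]
      try rfl
    rw [hfn]
    have hab : a + b = 1 / 2 * (2 * a) + 1 / 2 * (2 * b) := by ring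
    rw [hab, ← e1, ← e2]; exact h
  refine ⟨a + b, hV.hasDerivWithinAt, ?_⟩
  -- notation for the scalar integrals
  set Q := ∫ x in (0:ℝ)..L, ‖pd2 M (t, x)‖ ^ 2 with hQ
  set P := ∫ x in (0:ℝ)..L, ‖M (t, x) - r‖ ^ 2 with hP
  set Fq := ∫ x in (0:ℝ)..L, ‖cross3 (M (t, x)) (pd2 (pd2 M) (t, x))‖ ^ 2 with hFq
  set Iq := ∫ x in (0:ℝ)..L, ⟪cross3 (M (t, x)) (pd2 (pd2 M) (t, x)), cross3 r (M (t, x))⟫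
    with hIq
  -- rewrite the goal integrals
  have hgoalQ : (∫ x in (0:ℝ)..L, ‖deriv (m t) x‖ ^ 2) = Q := by
    rw [hQ]; congr 1; funext x; rw [hderiv_m]
  have hgoalF : (∫ x in (0:ℝ)..L, ‖cross3 (m t x) (mxx m t x)‖ ^ 2) = Fq := by
    rw [hFq]; congr 1; funext x; rw [hmxx_eq]
  rw [hgoalQ, hgoalF]
  -- integration by parts identities
  have IBP1 : b = - ∫ x in (0:ℝ)..L, ⟪pd2 (pd2 M) (t, x), pd1 M (t, x)⟫ := by
    rw [hb]
    exact ibp hu''d hw_d hcu'' hcw' (by rw [hubL, hub0]; simp)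
  have IBP2 : (∫ x in (0:ℝ)..L, ⟪M (t, x) - r, pd2 (pd2 M) (t, x)⟫)
      = - ∫ x in (0:ℝ)..L, ⟪pd2 M (t, x), pd2 M (t, x)⟫ := by
    refine ibp (fun x => (hasDerivAt_pd2 hMdiff t x).sub_const r) hu''d hcu' hcu'' ?_
    rw [hubL, hub0]; simp
  have hcru' : ∀ x : ℝ, HasDerivAt (fun y => cross3 r (M (t, y)))
      (cross3 r (pd2 M (t, x))) x := fun x => by
    simpa [cross3_zero_left] using (hasDerivAt_const x r).cross (hasDerivAt_pd2 hMdiff t x)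
  have IBP3 : (∫ x in (0:ℝ)..L, ⟪cross3 (M (t, x)) (pd2 M (t, x)), cross3 r (pd2 M (t, x))⟫)
      = - Iq := by
    rw [hIq]
    refine ibp hgd hcru' hcg' (continuous_const.cross hcu') ?_
    rw [hubL, hub0]
    simp [cross3_zero_right]
  have Z0 : (∫ x in (0:ℝ)..L, ⟪r, cross3 (M (t, x)) (pd2 (pd2 M) (t, x))⟫) = 0 := by
    have hd : ∀ x ∈ Set.uIcc (0:ℝ) L,
        HasDerivAt (fun y => ⟪r, cross3 (M (t, y)) (pd2 M (t, y))⟫)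
          (⟪r, cross3 (M (t, x)) (pd2 (pd2 M) (t, x))⟫) x := fun x _ => by
      simpa using HasDerivAt.inner (𝕜 := ℝ) (hasDerivAt_const x r) (hgd x)
    rw [intervalIntegral.integral_eq_sub_of_hasDerivAt hd
      ((continuous_const.inner hcg').intervalIntegrable _ _)]
    rw [hubL, hub0]
    simp [cross3_zero_right]
  -- a + b = ∫ ⟪u - r - u'', w⟫
  have hsum1 : a + b = ∫ x in (0:ℝ)..L,
      ⟪M (t, x) - r - pd2 (pd2 M) (t, x), pd1 M (t, x)⟫ := by
    have i1 : IntervalIntegrable (fun x => ⟪M (t, x) - r, pd1 M (t, x)⟫)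
        MeasureTheory.volume 0 L :=
      ((hcu.sub continuous_const).inner hcw).intervalIntegrable _ _
    have i2 : IntervalIntegrable (fun x => ⟪pd2 (pd2 M) (t, x), pd1 M (t, x)⟫)
        MeasureTheory.volume 0 L :=
      (hcu''.inner hcw).intervalIntegrable _ _
    rw [IBP1, ha, ← sub_eq_add_neg, ← intervalIntegral.integral_sub i1 i2]
    apply intervalIntegral.integral_congr
    intro x hx
    simp [inner_sub_left]
  -- substitute the PDE
  have hw_pde : ∀ x ∈ Set.uIcc (0:ℝ) L, pd1 M (t, x)
      = cross3 (M (t, x)) (pd2 (pd2 M) (t, x))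
        - ν • cross3 (M (t, x)) (cross3 (M (t, x)) (pd2 (pd2 M) (t, x)))
        + k • (r - M (t, x)) := by
    intro x hx
    rw [← hderiv_t t x, hpde t x ht (by rwa [Set.uIcc_of_le hL.le] at hx), hmxx_eq x]
  have hmain : (∫ x in (0:ℝ)..L, ⟪M (t, x) - r - pd2 (pd2 M) (t, x), pd1 M (t, x)⟫)
      = ∫ x in (0:ℝ)..L,
        (((((ν * ⟪cross3 (M (t, x)) (pd2 (pd2 M) (t, x)), cross3 r (M (t, x))⟫
          - ν * ‖cross3 (M (t, x)) (pd2 (pd2 M) (t, x))‖ ^ 2)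
          - k * ‖M (t, x) - r‖ ^ 2)
          + k * ⟪M (t, x) - r, pd2 (pd2 M) (t, x)⟫)
          - ⟪r, cross3 (M (t, x)) (pd2 (pd2 M) (t, x))⟫)) := by
    apply intervalIntegral.integral_congr
    intro x hx
    dsimp only
    rw [hw_pde x hx]
    exact pointwise_inner ν k (M (t, x)) (pd2 (pd2 M) (t, x)) r
  -- split the big integral
  have cA : Continuous fun x : ℝ =>
      ⟪cross3 (M (t, x)) (pd2 (pd2 M) (t, x)), cross3 r (M (t, x))⟫ :=
    hcg'.inner (continuous_const.cross hcu)
  have cB : Continuous fun x : ℝ => ‖cross3 (M (t, x)) (pd2 (pd2 M) (t, x))‖ ^ 2 :=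
    hcg'.norm.pow 2
  have cC : Continuous fun x : ℝ => ‖M (t, x) - r‖ ^ 2 :=
    (hcu.sub continuous_const).norm.pow 2
  have cD : Continuous fun x : ℝ => ⟪M (t, x) - r, pd2 (pd2 M) (t, x)⟫ :=
    (hcu.sub continuous_const).inner hcu''
  have cE : Continuous fun x : ℝ => ⟪r, cross3 (M (t, x)) (pd2 (pd2 M) (t, x))⟫ :=
    continuous_const.inner hcg'
  have iA := (cA.intervalIntegrable (μ := MeasureTheory.volume) 0 L).const_mul ν
  have iB := (cB.intervalIntegrable (μ := MeasureTheory.volume) 0 L).const_mul ν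
  have iC := (cC.intervalIntegrable (μ := MeasureTheory.volume) 0 L).const_mul k
  have iD := (cD.intervalIntegrable (μ := MeasureTheory.volume) 0 L).const_mul k
  have iE := cE.intervalIntegrable (μ := MeasureTheory.volume) 0 L
  have hsplit : (∫ x in (0:ℝ)..L,
        (((((ν * ⟪cross3 (M (t, x)) (pd2 (pd2 M) (t, x)), cross3 r (M (t, x))⟫
          - ν * ‖cross3 (M (t, x)) (pd2 (pd2 M) (t, x))‖ ^ 2)
          - k * ‖M (t, x) - r‖ ^ 2)
          + k * ⟪M (t, x) - r, pd2 (pd2 M) (t, x)⟫)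
          - ⟪r, cross3 (M (t, x)) (pd2 (pd2 M) (t, x))⟫)))
      = ν * Iq - ν * Fq - k * P
        + k * (∫ x in (0:ℝ)..L, ⟪M (t, x) - r, pd2 (pd2 M) (t, x)⟫)
        - (∫ x in (0:ℝ)..L, ⟪r, cross3 (M (t, x)) (pd2 (pd2 M) (t, x))⟫) := by
    rw [intervalIntegral.integral_sub ((((iA.sub iB).sub iC).add iD)) iE,
      intervalIntegral.integral_add ((iA.sub iB).sub iC) iD,
      intervalIntegral.integral_sub (iA.sub iB) iC,
      intervalIntegral.integral_sub iA iB,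
      intervalIntegral.integral_const_mul, intervalIntegral.integral_const_mul,
      intervalIntegral.integral_const_mul, intervalIntegral.integral_const_mul,
      ← hIq, ← hFq, ← hP]
  have hQinner : (∫ x in (0:ℝ)..L, ⟪pd2 M (t, x), pd2 M (t, x)⟫) = Q := by
    rw [hQ]
    exact intervalIntegral.integral_congr fun x _ => real_inner_self_eq_norm_sq _
  -- final value of the derivative
  have hVval : a + b = ν * Iq - ν * Fq - k * P - k * Q := by
    rw [hsum1, hmain, hsplit, IBP2, hQinner, Z0]
    ring
  -- bound on Iq
  set Cg := ∫ y in (0:ℝ)..L, ‖cross3 (M (t, y)) (pd2 (pd2 M) (t, y))‖ with hCg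
  set T := ∫ x in (0:ℝ)..L, ‖pd2 M (t, x)‖ with hT
  have hgb : ∀ x ∈ Set.Icc (0:ℝ) L, ‖cross3 (M (t, x)) (pd2 M (t, x))‖ ≤ Cg := by
    intro x hx
    have h0 : cross3 (M (t, 0)) (pd2 M (t, 0)) = 0 := by
      rw [hub0]; exact cross3_zero_right _
    have hgx : cross3 (M (t, x)) (pd2 M (t, x))
        = ∫ y in (0:ℝ)..x, cross3 (M (t, y)) (pd2 (pd2 M) (t, y)) := by
      rw [intervalIntegral.integral_eq_sub_of_hasDerivAt (fun y _ => hgd y)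
        (hcg'.intervalIntegrable _ _), h0, sub_zero]
    rw [hgx]
    calc ‖∫ y in (0:ℝ)..x, cross3 (M (t, y)) (pd2 (pd2 M) (t, y))‖
        ≤ ∫ y in (0:ℝ)..x, ‖cross3 (M (t, y)) (pd2 (pd2 M) (t, y))‖ :=
          intervalIntegral.norm_integral_le_integral_norm hx.1
      _ ≤ Cg := by
          rw [hCg, ← intervalIntegral.integral_add_adjacent_intervals
            (a := (0:ℝ)) (b := x) (c := L)
            (hcg'.norm.intervalIntegrable _ _) (hcg'.norm.intervalIntegrable _ _)]
          have h2 : 0 ≤ ∫ y in x..L, ‖cross3 (M (t, y)) (pd2 (pd2 M) (t, y))‖ :=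
            intervalIntegral.integral_nonneg hx.2 (fun _ _ => norm_nonneg _)
          linarith
  have hIqle1 : Iq ≤ Cg * T := by
    have hIq2 : Iq = - ∫ x in (0:ℝ)..L,
        ⟪cross3 (M (t, x)) (pd2 M (t, x)), cross3 r (pd2 M (t, x))⟫ := by
      linarith [IBP3]
    rw [hIq2]
    have step1 : - (∫ x in (0:ℝ)..L,
        ⟪cross3 (M (t, x)) (pd2 M (t, x)), cross3 r (pd2 M (t, x))⟫)
        ≤ ∫ x in (0:ℝ)..L, Cg * ‖pd2 M (t, x)‖ := by
      rw [← intervalIntegral.integral_neg]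
      apply intervalIntegral.integral_mono_on hL.le
        (((hcg.inner (continuous_const.cross hcu')).neg).intervalIntegrable _ _)
        ((continuous_const.mul hcu'.norm).intervalIntegrable _ _)
      intro x hx
      have h1 : - ⟪cross3 (M (t, x)) (pd2 M (t, x)), cross3 r (pd2 M (t, x))⟫
          ≤ ‖cross3 (M (t, x)) (pd2 M (t, x))‖ * ‖cross3 r (pd2 M (t, x))‖ := by
        have := abs_real_inner_le_norm (cross3 (M (t, x)) (pd2 M (t, x)))
          (cross3 r (pd2 M (t, x)))
        have h2 := neg_abs_le (⟪cross3 (M (t, x)) (pd2 M (t, x)), cross3 r (pd2 M (t, x))⟫)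
        linarith
      have h3 : ‖cross3 r (pd2 M (t, x))‖ ≤ ‖pd2 M (t, x)‖ := by
        have := norm_cross3_le r (pd2 M (t, x))
        rwa [hr, one_mul] at this
      calc - ⟪cross3 (M (t, x)) (pd2 M (t, x)), cross3 r (pd2 M (t, x))⟫
          ≤ ‖cross3 (M (t, x)) (pd2 M (t, x))‖ * ‖cross3 r (pd2 M (t, x))‖ := h1
        _ ≤ ‖cross3 (M (t, x)) (pd2 M (t, x))‖ * ‖pd2 M (t, x)‖ :=
            mul_le_mul_of_nonneg_left h3 (norm_nonneg _)
        _ ≤ Cg * ‖pd2 M (t, x)‖ :=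
            mul_le_mul_of_nonneg_right (hgb x hx) (norm_nonneg _)
    calc - (∫ x in (0:ℝ)..L,
        ⟪cross3 (M (t, x)) (pd2 M (t, x)), cross3 r (pd2 M (t, x))⟫)
        ≤ ∫ x in (0:ℝ)..L, Cg * ‖pd2 M (t, x)‖ := step1
      _ = Cg * T := by rw [intervalIntegral.integral_const_mul, hT]
  -- Cauchy–Schwarz bounds
  have hCg2 : Cg ^ 2 ≤ L * Fq := by
    rw [hCg, hFq]; exact integral_cs hL.le hcg'.norm
  have hT2 : T ^ 2 ≤ L * Q := by
    rw [hT, hQ]; exact integral_cs hL.le hcu'.norm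
  have hCgnn : 0 ≤ Cg :=
    intervalIntegral.integral_nonneg hL.le (fun _ _ => norm_nonneg _)
  have hTnn : 0 ≤ T :=
    intervalIntegral.integral_nonneg hL.le (fun _ _ => norm_nonneg _)
  have hQnn : 0 ≤ Q :=
    intervalIntegral.integral_nonneg hL.le (fun _ _ => sq_nonneg _)
  have hFnn : 0 ≤ Fq :=
    intervalIntegral.integral_nonneg hL.le (fun _ _ => sq_nonneg _)
  have hPnn : 0 ≤ P :=
    intervalIntegral.integral_nonneg hL.le (fun _ _ => sq_nonneg _)
  exact final_arith L ν k a b Q P Fq Iq Cg T hL hν hCg2 hT2 hCgnn hTnn hQnn hFnn hIqle1 hVval
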